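/- arXiv:2509.01281 — 3 statements merged into one kernel-verified Lean document; each statement's English description precedes it below -/
import Mathlib

section
/- The ε-distinguishability ratio μ_{ρ,M}(ε) := (1/(2ε)) · min{ ‖ρ − σ‖_M : σ a density operator with ‖ρ − σ‖₁ ≥ 2ε } is a monotonically non-decreasing function of ε on (0, ε_ρ], where ε_ρ = (1/2)·max_σ ‖ρ − σ‖₁. -/
open Matrix
open scoped ComplexOrder

namespace QSVQDH

variable {d : ℕ}

/-- Schatten 1-norm (trace norm). -/
noncomputable def trNorm (A : Matrix (Fin d) (Fin d) ℂ) : ℝ :=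
  ((Matrix.posSemidef_conjTranspose_mul_self A).1.eigenvectorUnitary.1 *
    diagonal (((↑) : ℝ → ℂ) ∘ (Real.sqrt ·) ∘
      (Matrix.posSemidef_conjTranspose_mul_self A).1.eigenvalues) *
    (star (Matrix.posSemidef_conjTranspose_mul_self A).1.eigenvectorUnitary :
      Matrix (Fin d) (Fin d) ℂ)).trace.re

/-- Schatten 2-norm (Hilbert–Schmidt norm). -/
noncomputable def hsNorm (A : Matrix (Fin d) (Fin d) ℂ) : ℝ :=
  Real.sqrt ((Aᴴ * A).trace.re)

/-- Operator norm. -/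
noncomputable def opNorm (A : Matrix (Fin d) (Fin d) ℂ) : ℝ :=
  ‖Matrix.toEuclideanCLM (𝕜 := ℂ) A‖

/-- Density operator: positive semidefinite with unit trace. -/
def IsDensity (ρ : Matrix (Fin d) (Fin d) ℂ) : Prop := ρ.PosSemidef ∧ ρ.trace = 1

/-- POVM element: 0 ≤ M ≤ I. -/
def IsPOVMElem (M : Matrix (Fin d) (Fin d) ℂ) : Prop := M.PosSemidef ∧ (1 - M).PosSemidef

/-- A measurement class of binary effects: contains 0, consists of POVM elements,
is convex, and is closed under M ↦ I − M. -/
def IsMClass (Mset : Set (Matrix (Fin d) (Fin d) ℂ)) : Prop :=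
  0 ∈ Mset ∧ (∀ M ∈ Mset, IsPOVMElem M) ∧ Convex ℝ Mset ∧ (∀ M ∈ Mset, 1 - M ∈ Mset)

/-- The M-seminorm ‖Δ‖_M = sup_{M ∈ Mset} (2 tr(MΔ) − tr Δ). -/
noncomputable def Mnorm (Mset : Set (Matrix (Fin d) (Fin d) ℂ))
    (Δ : Matrix (Fin d) (Fin d) ℂ) : ℝ :=
  sSup ((fun M => 2 * (M * Δ).trace.re - Δ.trace.re) '' Mset)

/-- The ε-distinguishability ratio μ_{ρ,M}(ε). -/
noncomputable def mu (Mset : Set (Matrix (Fin d) (Fin d) ℂ))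
    (ρ : Matrix (Fin d) (Fin d) ℂ) (ε : ℝ) : ℝ :=
  (1 / (2 * ε)) *
    sInf ((fun σ => Mnorm Mset (ρ - σ)) '' {σ | IsDensity σ ∧ 2 * ε ≤ trNorm (ρ - σ)})

/-- The ε-visibility γ_{V,M}(ε), where the subspace V is given by its
orthogonal projector P. -/
noncomputable def gamma (Mset : Set (Matrix (Fin d) (Fin d) ℂ))
    (P : Matrix (Fin d) (Fin d) ℂ) (ε : ℝ) : ℝ :=
  (1 / ε) * sSup ((fun Ω =>
      sInf ((fun p : Matrix (Fin d) (Fin d) ℂ × Matrix (Fin d) (Fin d) ℂ =>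
          (Ω * (p.1 - p.2)).trace.re) ''
        {p | IsDensity p.1 ∧ P * p.1 = p.1 ∧ IsDensity p.2 ∧ (p.2 * P).trace.re ≤ 1 - ε}))
    '' Mset)

/-- The ε-visibility in its minimax (minimum) form. -/
noncomputable def gammaMin (Mset : Set (Matrix (Fin d) (Fin d) ℂ))
    (P : Matrix (Fin d) (Fin d) ℂ) (ε : ℝ) : ℝ :=
  sInf ((fun p : Matrix (Fin d) (Fin d) ℂ × Matrix (Fin d) (Fin d) ℂ =>
      (1 / (2 * ε)) * Mnorm Mset (p.1 - p.2)) ''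
    {p | IsDensity p.1 ∧ P * p.1 = p.1 ∧ IsDensity p.2 ∧ (p.2 * P).trace.re ≤ 1 - ε})

/-- μ_{ρ,M}(1), defined through perfectly distinguishable (orthogonal) counterparts. -/
noncomputable def muone (Mset : Set (Matrix (Fin d) (Fin d) ℂ))
    (ρ : Matrix (Fin d) (Fin d) ℂ) : ℝ :=
  (1 / 2) * sInf ((fun σ => Mnorm Mset (ρ - σ)) '' {σ | IsDensity σ ∧ (ρ * σ).trace = 0})

/-- The distinguishability ratio μ̂_{ρ,M}. -/
noncomputable def muhat (Mset : Set (Matrix (Fin d) (Fin d) ℂ))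
    (ρ : Matrix (Fin d) (Fin d) ℂ) : ℝ :=
  sInf ((fun σ => Mnorm Mset (ρ - σ) / trNorm (ρ - σ)) '' {σ | IsDensity σ ∧ σ ≠ ρ})


section Aux

open scoped MatrixOrder

noncomputable def _root_.Matrix.PosSemidef.sqrt {A : Matrix (Fin d) (Fin d) ℂ}
    (_ : A.PosSemidef) : Matrix (Fin d) (Fin d) ℂ :=
  CFC.sqrt A

lemma _root_.Matrix.PosSemidef.posSemidef_sqrt {A : Matrix (Fin d) (Fin d) ℂ}
    (hA : A.PosSemidef) : hA.sqrt.PosSemidef :=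
  (CFC.sqrt_nonneg A).posSemidef

lemma _root_.Matrix.PosSemidef.sqrt_mul_self {A : Matrix (Fin d) (Fin d) ℂ}
    (hA : A.PosSemidef) : hA.sqrt * hA.sqrt = A :=
  CFC.sqrt_mul_sqrt_self A hA.nonneg

lemma _root_.Matrix.PosSemidef.sq_sqrt {A : Matrix (Fin d) (Fin d) ℂ}
    (hA : A.PosSemidef) : hA.sqrt ^ 2 = A :=
  CFC.sq_sqrt A hA.nonneg

lemma _root_.Matrix.PosSemidef.eq_sqrt_of_sq_eq {A B : Matrix (Fin d) (Fin d) ℂ}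
    (hB : B.PosSemidef) (hA : A.PosSemidef) (h : B ^ 2 = A) : B = hA.sqrt :=
  (CFC.sqrt_unique (by rw [← sq, h]) hB.nonneg).symm

lemma trNorm_eq_sqrt (A : Matrix (Fin d) (Fin d) ℂ) :
    trNorm A = (Matrix.posSemidef_conjTranspose_mul_self A).sqrt.trace.re := by
  have hX := Matrix.posSemidef_conjTranspose_mul_self A
  unfold trNorm Matrix.PosSemidef.sqrt
  rw [CFC.sqrt_eq_real_sqrt _ hX.nonneg, cfcₙ_eq_cfc, hX.1.cfc_eq]
  rfl

lemma psd_diag_entry {M : Matrix (Fin d) (Fin d) ℂ} (hM : M.PosSemidef) (i : Fin d) :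
    0 ≤ (M i i).re := by
  have := hM.re_dotProduct_nonneg (Pi.single i 1)
  simpa [dotProduct, mulVec, Pi.single_apply, Finset.sum_ite_eq] using this

lemma psd_trace_re_nonneg {M : Matrix (Fin d) (Fin d) ℂ} (hM : M.PosSemidef) :
    0 ≤ M.trace.re := by
  rw [Matrix.trace]
  simp only [Complex.re_sum]
  exact Finset.sum_nonneg fun i _ => psd_diag_entry hM i

lemma psd_smul {A : Matrix (Fin d) (Fin d) ℂ} (hA : A.PosSemidef) {t : ℝ} (ht : 0 ≤ t) :
    ((t : ℂ) • A).PosSemidef := by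
  exact hA.smul (by exact_mod_cast ht)

lemma psd_trace_mul_re_nonneg {A B : Matrix (Fin d) (Fin d) ℂ} (hA : A.PosSemidef)
    (hB : B.PosSemidef) : 0 ≤ (A * B).trace.re := by
  obtain ⟨s, hs, hss⟩ : ∃ s : Matrix (Fin d) (Fin d) ℂ, s.PosSemidef ∧ s * s = A :=
    ⟨hA.sqrt, hA.posSemidef_sqrt, hA.sqrt_mul_self⟩
  rw [← hss, ← trace_mul_cycle]
  have h : (sᴴ * B * s).PosSemidef := hB.conjTranspose_mul_mul_same s
  rw [hs.1.eq] at h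
  exact psd_trace_re_nonneg h

variable {U : Matrix (Fin d) (Fin d) ℂ}

lemma UD_mul (hU : U ∈ Matrix.unitaryGroup (Fin d) ℂ) (f g : Fin d → ℂ) :
    (U * diagonal f * star U) * (U * diagonal g * star U)
      = U * diagonal (fun i => f i * g i) * star U := by
  have h : star U * U = 1 := mem_unitaryGroup_iff'.mp hU
  have e : (U * diagonal f * star U) * (U * diagonal g * star U)
      = U * (diagonal f * ((star U * U) * (diagonal g * star U))) := by
    simp only [mul_assoc]
  rw [e, h, one_mul, ← mul_assoc (diagonal f) (diagonal g) (star U), diagonal_mul_diagonal,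
    ← mul_assoc]

lemma trace_unitary_conj (hU : U ∈ Matrix.unitaryGroup (Fin d) ℂ) (f : Fin d → ℂ) :
    (U * diagonal f * star U).trace = ∑ i, f i := by
  have h : star U * U = 1 := mem_unitaryGroup_iff'.mp hU
  rw [trace_mul_cycle, h, one_mul, trace_diagonal]

lemma diag_conjT (f : Fin d → ℝ) :
    (diagonal fun i => (f i : ℂ))ᴴ = diagonal fun i => (f i : ℂ) := by
  rw [diagonal_conjTranspose,
    show star (fun i => ((f i : ℝ) : ℂ)) = (fun i => ((f i : ℝ) : ℂ))
      from funext fun i => Complex.conj_ofReal _]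

lemma herm_unitary_conj (f : Fin d → ℝ) :
    (U * diagonal (fun i => (f i : ℂ)) * star U).IsHermitian := by
  unfold Matrix.IsHermitian
  simp only [star_eq_conjTranspose, conjTranspose_mul, conjTranspose_conjTranspose, diag_conjT,
    mul_assoc]

lemma psd_unitary_conj (hU : U ∈ Matrix.unitaryGroup (Fin d) ℂ) {f : Fin d → ℝ}
    (hf : ∀ i, 0 ≤ f i) : (U * diagonal (fun i => (f i : ℂ)) * star U).PosSemidef := by
  have hd : (diagonal (fun i => (f i : ℂ))).PosSemidef := by
    rw [posSemidef_diagonal_iff]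
    intro i
    exact_mod_cast hf i
  have := hd.mul_mul_conjTranspose_same U
  rw [star_eq_conjTranspose]
  exact this

lemma trNorm_unitary_diag (hU : U ∈ Matrix.unitaryGroup (Fin d) ℂ) (μ : Fin d → ℝ) :
    trNorm (U * diagonal (fun i => (μ i : ℂ)) * star U) = ∑ i, |μ i| := by
  set A := U * diagonal (fun i => (μ i : ℂ)) * star U with hAdef
  have hA : Aᴴ = A := herm_unitary_conj μ
  have hAH : Aᴴ * A = U * diagonal (fun i => (μ i : ℂ) * (μ i : ℂ)) * star U := by
    rw [hA, hAdef, UD_mul hU]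
  have hB : (U * diagonal (fun i => ((|μ i| : ℝ) : ℂ)) * star U).PosSemidef :=
    psd_unitary_conj hU (fun i => abs_nonneg _)
  have hB2 : (U * diagonal (fun i => ((|μ i| : ℝ) : ℂ)) * star U) ^ 2 = Aᴴ * A := by
    rw [pow_two, UD_mul hU, hAH,
      show (fun i => ((|μ i| : ℝ) : ℂ) * ((|μ i| : ℝ) : ℂ)) = (fun i => (μ i : ℂ) * (μ i : ℂ))
        from funext fun i => by rw [← Complex.ofReal_mul, ← Complex.ofReal_mul, abs_mul_abs_self]]
  have hsq := hB.eq_sqrt_of_sq_eq (posSemidef_conjTranspose_mul_self A) hB2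
  rw [trNorm_eq_sqrt]
  rw [← hsq, trace_unitary_conj hU, ← Complex.ofReal_sum]
  exact Complex.ofReal_re _

lemma trNorm_eq_of (A B : Matrix (Fin d) (Fin d) ℂ) (h : Aᴴ * A = Bᴴ * B) :
    trNorm A = trNorm B := by
  have h1 := Matrix.posSemidef_conjTranspose_mul_self A
  have h2 := Matrix.posSemidef_conjTranspose_mul_self B
  have : h1.sqrt = h2.sqrt := by
    apply Matrix.PosSemidef.eq_sqrt_of_sq_eq h1.posSemidef_sqrt
    rw [h1.sq_sqrt, h]
  rw [trNorm_eq_sqrt, trNorm_eq_sqrt, this]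

lemma trNorm_neg (A : Matrix (Fin d) (Fin d) ℂ) : trNorm (-A) = trNorm A :=
  trNorm_eq_of _ _ (by simp)

lemma trNorm_smul (A : Matrix (Fin d) (Fin d) ℂ) {t : ℝ} (ht : 0 ≤ t) :
    trNorm ((t : ℂ) • A) = t * trNorm A := by
  have hX := Matrix.posSemidef_conjTranspose_mul_self A
  have hB : ((t : ℂ) • hX.sqrt).PosSemidef := psd_smul hX.posSemidef_sqrt ht
  have hB2 : ((t : ℂ) • hX.sqrt) ^ 2 = ((t : ℂ) • A)ᴴ * ((t : ℂ) • A) := by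
    rw [pow_two, conjTranspose_smul]
    rw [smul_mul_smul_comm, hX.sqrt_mul_self]
    rw [smul_mul_smul_comm]
    congr 1
    simp [Complex.conj_ofReal]
  have hsq := hB.eq_sqrt_of_sq_eq (Matrix.posSemidef_conjTranspose_mul_self ((t : ℂ) • A)) hB2
  rw [trNorm_eq_sqrt, trNorm_eq_sqrt]
  rw [← hsq, trace_smul, smul_eq_mul]
  exact Complex.re_ofReal_mul _ _

-- coercion test for spectral theorem shape
lemma trNorm_eigen {A : Matrix (Fin d) (Fin d) ℂ} (hA : A.IsHermitian) :
    trNorm A = ∑ i, |hA.eigenvalues i| := by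
  conv_lhs => rw [hA.spectral_theorem]
  exact trNorm_unitary_diag (hA.eigenvectorUnitary).2 _

lemma sum_eigen {A : Matrix (Fin d) (Fin d) ℂ} (hA : A.IsHermitian) :
    ((∑ i, hA.eigenvalues i : ℝ) : ℂ) = A.trace := by
  conv_rhs => rw [hA.spectral_theorem, Unitary.conjStarAlgAut_apply]
  rw [trace_unitary_conj (hA.eigenvectorUnitary).2]
  push_cast
  rfl

lemma conj_sub (f g : Fin d → ℝ) :
    U * diagonal (fun i => (f i : ℂ)) * star U - U * diagonal (fun i => (g i : ℂ)) * star U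
      = U * diagonal (fun i => ((f i - g i : ℝ) : ℂ)) * star U := by
  rw [← sub_mul, ← mul_sub, diagonal_sub]
  congr 2
  funext i
  push_cast
  ring

lemma one_conj (hU : U ∈ Matrix.unitaryGroup (Fin d) ℂ) :
    (1 : Matrix (Fin d) (Fin d) ℂ) = U * diagonal (fun _ => ((1 : ℝ) : ℂ)) * star U := by
  have h : U * star U = 1 := mem_unitaryGroup_iff.mp hU
  simp only [Complex.ofReal_one, diagonal_one, mul_one, h]

/-- eigenvalues of a density operator sum to 1 -/
lemma density_eigen_sum {σ : Matrix (Fin d) (Fin d) ℂ} (hσ : IsDensity σ) :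
    ∑ i, hσ.1.1.eigenvalues i = 1 := by
  have h2 := (sum_eigen hσ.1.1).trans hσ.2
  exact_mod_cast h2

/-- 1 - σ is PSD for a density operator σ. -/
lemma one_sub_density_psd {σ : Matrix (Fin d) (Fin d) ℂ} (hσ : IsDensity σ) :
    (1 - σ).PosSemidef := by
  set hH := hσ.1.1
  have hU := hH.eigenvectorUnitary.2
  have key : (1 : Matrix (Fin d) (Fin d) ℂ) - σ
      = hH.eigenvectorUnitary.1 * diagonal (fun i => ((1 - hH.eigenvalues i : ℝ) : ℂ))
        * star hH.eigenvectorUnitary.1 := by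
    conv_lhs => rw [hH.spectral_theorem]
    conv_lhs => rw [one_conj hU]
    exact conj_sub _ _
  rw [key]
  apply psd_unitary_conj hU
  intro i
  have h1 : hH.eigenvalues i ≤ ∑ j, hH.eigenvalues j :=
    Finset.single_le_sum (fun j _ => hσ.1.eigenvalues_nonneg j) (Finset.mem_univ i)
  rw [density_eigen_sum hσ] at h1
  linarith

/-- key upper bound: trNorm (ρ - σ) ≤ 2 * (1 - λmin ρ)  -/
lemma trNorm_le_bound {ρ σ : Matrix (Fin d) (Fin d) ℂ} (hρ : IsDensity ρ) (hσ : IsDensity σ)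
    {c : ℝ} (hc0 : 0 ≤ c) (hc1 : c ≤ 1) (hcpsd : (ρ - (c : ℂ) • 1).PosSemidef) :
    trNorm (ρ - σ) ≤ 2 * (1 - c) := by
  have hΔh : (σ - ρ).IsHermitian := hσ.1.1.sub hρ.1.1
  have hneg : trNorm (ρ - σ) = trNorm (σ - ρ) := by rw [← trNorm_neg (σ - ρ), neg_sub]
  set V := hΔh.eigenvectorUnitary with hVdef
  have hU := hΔh.eigenvectorUnitary.2
  set ν := hΔh.eigenvalues with hνdef
  -- sum of eigenvalues of Δ is 0
  have hsum : ∑ i, ν i = 0 := by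
    have := sum_eigen hΔh
    rw [trace_sub, hσ.2, hρ.2, sub_self] at this
    exact_mod_cast this
  -- the positive-part projector
  set χ : Fin d → ℝ := fun i => if 0 < ν i then 1 else 0 with hχdef
  set P := V.1 * diagonal (fun i => (χ i : ℂ)) * star V.1 with hPdef
  have hPpsd : P.PosSemidef := psd_unitary_conj hU (fun i => by by_cases h : 0 < ν i <;> simp [hχdef, h])
  have h1Ppsd : (1 - P).PosSemidef := by
    have key : (1 : Matrix (Fin d) (Fin d) ℂ) - P
        = V.1 * diagonal (fun i => ((1 - χ i : ℝ) : ℂ)) * star V.1 := by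
      conv_lhs => rw [one_conj hU, hPdef]
      exact conj_sub _ _
    rw [key]
    exact psd_unitary_conj hU (fun i => by by_cases h : 0 < ν i <;> simp [hχdef, h])
  -- trace of P * Δ
  have hPtr : (P * (σ - ρ)).trace.re = ∑ i, χ i * ν i := by
    have hspec : σ - ρ = V.1 * diagonal (fun i => (ν i : ℂ)) * star V.1 := by
      conv_lhs => rw [hΔh.spectral_theorem]
      rfl
    rw [hPdef, hspec, UD_mul hU, trace_unitary_conj hU,
      show (∑ i, ((χ i : ℂ)) * ((ν i : ℂ))) = ((∑ i, χ i * ν i : ℝ) : ℂ) by push_cast; rfl,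
      Complex.ofReal_re]
  -- p = number of positive eigenvalues
  have hPtrace : P.trace.re = ∑ i, χ i := by
    rw [hPdef, trace_unitary_conj hU,
      show (∑ i, ((χ i : ℂ))) = ((∑ i, χ i : ℝ) : ℂ) by push_cast; rfl, Complex.ofReal_re]
  set p := ∑ i, χ i with hpdef
  have hp0 : 0 ≤ p := Finset.sum_nonneg fun i _ => by by_cases h : 0 < ν i <;> simp [hχdef, h]
  -- trNorm Δ = 2 * ∑ χ ν
  have habs : trNorm (σ - ρ) = 2 * ∑ i, χ i * ν i := by
    rw [trNorm_eigen hΔh]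
    have : ∀ i, |ν i| = 2 * (χ i * ν i) - ν i := by
      intro i
      by_cases h : 0 < ν i
      · simp only [hχdef, if_pos h, one_mul, abs_of_pos h]
        ring
      · push_neg at h
        simp only [hχdef, if_neg (not_lt.mpr h), zero_mul, mul_zero, abs_of_nonpos h]
        ring
    rw [Finset.sum_congr rfl fun i _ => this i, Finset.sum_sub_distrib, hsum, sub_zero,
      ← Finset.mul_sum]
  -- bound tr(Pσ) ≤ 1
  have b1 : (P * σ).trace.re ≤ 1 := by
    have h := psd_trace_mul_re_nonneg h1Ppsd hσ.1
    have e : ((1 - P) * σ).trace = σ.trace - (P * σ).trace := by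
      rw [sub_mul, one_mul, trace_sub]
    rw [e, hσ.2] at h
    simp only [Complex.sub_re, Complex.one_re] at h
    linarith
  -- bound tr(Pσ) ≤ p
  have b2 : (P * σ).trace.re ≤ p := by
    have h := psd_trace_mul_re_nonneg hPpsd (one_sub_density_psd hσ)
    have e : (P * (1 - σ)).trace = P.trace - (P * σ).trace := by
      rw [mul_sub, mul_one, trace_sub]
    rw [e] at h
    simp only [Complex.sub_re] at h
    rw [hPtrace] at h
    linarith
  -- bound tr(Pρ) ≥ c * p
  have b3 : c * p ≤ (P * ρ).trace.re := by
    have h := psd_trace_mul_re_nonneg hPpsd hcpsd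
    have e : (P * (ρ - (c : ℂ) • 1)).trace = (P * ρ).trace - (c : ℂ) * P.trace := by
      rw [mul_sub, trace_sub, mul_smul_comm, mul_one, trace_smul, smul_eq_mul]
    rw [e] at h
    simp only [Complex.sub_re, Complex.re_ofReal_mul] at h
    rw [hPtrace] at h
    linarith
  -- combine
  have hsplit : (P * (σ - ρ)).trace.re = (P * σ).trace.re - (P * ρ).trace.re := by
    rw [mul_sub, trace_sub, Complex.sub_re]
  rw [hneg, habs]
  rw [← hPtr, hsplit]
  rcases le_or_gt p 1 with hp | hp
  · nlinarith
  · nlinarith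

lemma scalar_conj (hU : U ∈ Matrix.unitaryGroup (Fin d) ℂ) (c : ℝ) :
    ((c : ℂ) • (1 : Matrix (Fin d) (Fin d) ℂ))
      = U * diagonal (fun _ => (c : ℂ)) * star U := by
  conv_lhs => rw [one_conj hU]
  have h1 : (c : ℂ) • (diagonal fun _ : Fin d => ((1 : ℝ) : ℂ)) = diagonal (fun _ => (c : ℂ)) := by
    ext i j
    by_cases h : i = j <;> simp [Matrix.diagonal_apply, h]
  rw [← smul_mul_assoc, ← mul_smul_comm, h1]

lemma exists_far_density {ρ : Matrix (Fin d) (Fin d) ℂ} (hρ : IsDensity ρ) (hd : 0 < d) :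
    ∃ σ₀, IsDensity σ₀ ∧ ∀ σ, IsDensity σ → trNorm (ρ - σ) ≤ trNorm (ρ - σ₀) := by
  have hH : ρ.IsHermitian := hρ.1.1
  set U := hH.eigenvectorUnitary with hUdef
  have hU := hH.eigenvectorUnitary.2
  set lam := hH.eigenvalues with hlamdef
  have : Nonempty (Fin d) := ⟨⟨0, hd⟩⟩
  obtain ⟨i0, -, hmin⟩ := Finset.exists_min_image Finset.univ lam ⟨⟨0, hd⟩, Finset.mem_univ _⟩
  set c := lam i0 with hcdef
  have hsum : ∑ i, lam i = 1 := density_eigen_sum hρ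
  have hc0 : 0 ≤ c := hρ.1.eigenvalues_nonneg i0
  have hc1 : c ≤ 1 := by
    have h1 : c ≤ ∑ j, lam j :=
      Finset.single_le_sum (fun j _ => hρ.1.eigenvalues_nonneg j) (Finset.mem_univ i0)
    rwa [hsum] at h1
  have hcpsd : (ρ - (c : ℂ) • 1).PosSemidef := by
    have key : ρ - (c : ℂ) • 1
        = U.1 * diagonal (fun i => ((lam i - c : ℝ) : ℂ)) * star U.1 := by
      conv_lhs => rw [hH.spectral_theorem]
      conv_lhs => rw [scalar_conj hU c]
      exact conj_sub _ _
    rw [key]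
    exact psd_unitary_conj hU (fun i => by have := hmin i (Finset.mem_univ i); linarith)
  set e : Fin d → ℝ := fun i => if i = i0 then 1 else 0 with hedef
  refine ⟨U.1 * diagonal (fun i => (e i : ℂ)) * star U.1, ⟨?_, ?_⟩, ?_⟩
  · exact psd_unitary_conj hU (fun i => by by_cases h : i = i0 <;> simp [hedef, h])
  · rw [trace_unitary_conj hU,
      show (∑ i, ((e i : ℂ))) = ((∑ i, e i : ℝ) : ℂ) by push_cast; rfl]
    rw [show (∑ i, e i) = 1 by simp [hedef]]
    simp
  · intro σ hσ
    have hval : trNorm (ρ - U.1 * diagonal (fun i => (e i : ℂ)) * star U.1) = 2 * (1 - c) := by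
      have key : ρ - U.1 * diagonal (fun i => (e i : ℂ)) * star U.1
          = U.1 * diagonal (fun i => ((lam i - e i : ℝ) : ℂ)) * star U.1 := by
        conv_lhs => rw [hH.spectral_theorem]
        exact conj_sub _ _
      rw [key, trNorm_unitary_diag hU]
      have habs : ∀ i, |lam i - e i| = (lam i - e i) + (if i = i0 then 2 * (1 - c) else 0) := by
        intro i
        by_cases h : i = i0
        · subst h
          simp only [hedef, if_pos rfl]
          rw [abs_of_nonpos (by linarith)]
          simp only [if_true]
          ring
        · simp only [hedef, if_neg h]
          rw [sub_zero, abs_of_nonneg (hρ.1.eigenvalues_nonneg i), add_zero]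
      rw [Finset.sum_congr rfl fun i _ => habs i, Finset.sum_add_distrib,
        Finset.sum_sub_distrib, hsum, show (∑ i, e i) = 1 by simp [hedef],
        Finset.sum_ite_eq' Finset.univ i0 (fun _ => 2 * (1 - c))]
      simp
    rw [hval]
    exact trNorm_le_bound hρ hσ hc0 hc1 hcpsd

section MnormLemmas
variable {Mset : Set (Matrix (Fin d) (Fin d) ℂ)} {ρ σ : Matrix (Fin d) (Fin d) ℂ}

lemma diff_trace_zero (hρ : IsDensity ρ) (hσ : IsDensity σ) : (ρ - σ).trace = 0 := by
  rw [trace_sub, hρ.2, hσ.2, sub_self]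

lemma elem_le_two (hM : IsMClass Mset) (hρ : IsDensity ρ) (hσ : IsDensity σ)
    {M : Matrix (Fin d) (Fin d) ℂ} (hMmem : M ∈ Mset) :
    2 * (M * (ρ - σ)).trace.re - (ρ - σ).trace.re ≤ 2 := by
  obtain ⟨hMpsd, hMle⟩ := hM.2.1 M hMmem
  rw [diff_trace_zero hρ hσ]
  have h1 : 0 ≤ (M * σ).trace.re := psd_trace_mul_re_nonneg hMpsd hσ.1
  have h2 : (M * ρ).trace.re ≤ 1 := by
    have h := psd_trace_mul_re_nonneg hMle hρ.1
    have e : ((1 - M) * ρ).trace = ρ.trace - (M * ρ).trace := by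
      rw [sub_mul, one_mul, trace_sub]
    rw [e, hρ.2] at h
    simp only [Complex.sub_re, Complex.one_re] at h
    linarith
  have e : (M * (ρ - σ)).trace = (M * ρ).trace - (M * σ).trace := by
    rw [mul_sub, trace_sub]
  rw [e]
  simp only [Complex.sub_re, Complex.zero_re]
  linarith

lemma Mnorm_bddAbove (hM : IsMClass Mset) (hρ : IsDensity ρ) (hσ : IsDensity σ) :
    BddAbove ((fun M => 2 * (M * (ρ - σ)).trace.re - (ρ - σ).trace.re) '' Mset) := by
  refine ⟨2, ?_⟩
  rintro x ⟨M, hMmem, rfl⟩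
  exact elem_le_two hM hρ hσ hMmem

lemma Mnorm_diff_nonneg (hM : IsMClass Mset) (hρ : IsDensity ρ) (hσ : IsDensity σ) :
    0 ≤ Mnorm Mset (ρ - σ) := by
  have h0 : (0 : ℝ) ∈ (fun M => 2 * (M * (ρ - σ)).trace.re - (ρ - σ).trace.re) '' Mset := by
    refine ⟨0, hM.1, ?_⟩
    simp [diff_trace_zero hρ hσ]
  exact le_csSup (Mnorm_bddAbove hM hρ hσ) h0

lemma Mnorm_smul_le (hM : IsMClass Mset) (hρ : IsDensity ρ) (hσ : IsDensity σ)
    {t : ℝ} (ht : 0 ≤ t) :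
    Mnorm Mset ((t : ℂ) • (ρ - σ)) ≤ t * Mnorm Mset (ρ - σ) := by
  apply csSup_le
  · exact ⟨_, ⟨0, hM.1, rfl⟩⟩
  rintro x ⟨M, hMmem, rfl⟩
  have e1 : (M * ((t : ℂ) • (ρ - σ))).trace = (t : ℂ) * (M * (ρ - σ)).trace := by
    rw [mul_smul_comm, trace_smul, smul_eq_mul]
  have e2 : ((t : ℂ) • (ρ - σ)).trace = (t : ℂ) * (ρ - σ).trace := by
    rw [trace_smul, smul_eq_mul]
  simp only [e1, e2, Complex.re_ofReal_mul]
  have hle : 2 * (M * (ρ - σ)).trace.re - (ρ - σ).trace.re ≤ Mnorm Mset (ρ - σ) :=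
    le_csSup (Mnorm_bddAbove hM hρ hσ) ⟨M, hMmem, rfl⟩
  nlinarith [mul_le_mul_of_nonneg_left hle ht]


end MnormLemmas

end Aux

/-- the ε-distinguishability ratio μ_{ρ,M}(ε) is monotonically
non-decreasing on (0, ε_ρ], where ε_ρ = (1/2)·max_σ ‖ρ − σ‖₁. -/
theorem mu_monotone (Mset : Set (Matrix (Fin d) (Fin d) ℂ)) (hM : IsMClass Mset)
    (ρ : Matrix (Fin d) (Fin d) ℂ) (hρ : IsDensity ρ) (ε ε' : ℝ)
    (hε : 0 < ε) (hεε' : ε ≤ ε')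
    (hε' : ε' ≤ (1 / 2) * sSup ((fun σ => trNorm (ρ - σ)) '' {σ | IsDensity σ})) :
    mu Mset ρ ε ≤ mu Mset ρ ε' := by
  have hd : 0 < d := by
    rcases Nat.eq_zero_or_pos d with h | h
    · exfalso
      subst h
      have h2 := hρ.2
      rw [Matrix.trace] at h2
      simp at h2
    · exact h
  have hε'pos : 0 < ε' := lt_of_lt_of_le hε hεε'
  obtain ⟨σ₀, hσ₀, hmax⟩ := exists_far_density hρ hd
  -- σ₀ is admissible at level ε'
  have hσ₀far : 2 * ε' ≤ trNorm (ρ - σ₀) := by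
    have hsup : sSup ((fun σ => trNorm (ρ - σ)) '' {σ | IsDensity σ}) ≤ trNorm (ρ - σ₀) := by
      apply csSup_le
      · exact ⟨_, ⟨ρ, hρ, rfl⟩⟩
      rintro x ⟨σ, hσ, rfl⟩
      exact hmax σ hσ
    linarith
  set S := {σ : Matrix (Fin d) (Fin d) ℂ | IsDensity σ ∧ 2 * ε ≤ trNorm (ρ - σ)} with hSdef
  set S' := {σ : Matrix (Fin d) (Fin d) ℂ | IsDensity σ ∧ 2 * ε' ≤ trNorm (ρ - σ)} with hS'def
  set f : Matrix (Fin d) (Fin d) ℂ → ℝ := fun σ => Mnorm Mset (ρ - σ) with hfdef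
  set t := ε / ε' with htdef
  have ht0 : 0 < t := div_pos hε hε'pos
  have ht1 : t ≤ 1 := (div_le_one hε'pos).mpr hεε'
  have hbddS : BddBelow (f '' S) := by
    refine ⟨0, ?_⟩
    rintro x ⟨σ, hσ, rfl⟩
    exact Mnorm_diff_nonneg hM hρ hσ.1
  -- key inequality
  have hkey : ∀ x ∈ f '' S', sInf (f '' S) ≤ t * x := by
    rintro x ⟨σ', hσ', rfl⟩
    set σt := ρ - (t : ℂ) • (ρ - σ') with hσtdef
    have hdiff : ρ - σt = (t : ℂ) • (ρ - σ') := by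
      rw [hσtdef, sub_sub_cancel]
    have hσtmix : σt = ((1 - t : ℝ) : ℂ) • ρ + ((t : ℝ) : ℂ) • σ' := by
      rw [hσtdef, smul_sub]
      push_cast
      rw [sub_smul, one_smul]
      abel
    have hσtden : IsDensity σt := by
      constructor
      · rw [hσtmix]
        exact (psd_smul hρ.1 (by linarith)).add (psd_smul hσ'.1.1 ht0.le)
      · rw [hσtmix, trace_add, trace_smul, trace_smul, hρ.2, hσ'.1.2, smul_eq_mul, smul_eq_mul]
        push_cast
        ring
    have hσtS : σt ∈ S := by
      refine ⟨hσtden, ?_⟩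
      rw [hdiff, trNorm_smul _ ht0.le]
      have h2 : 2 * ε' ≤ trNorm (ρ - σ') := hσ'.2
      calc 2 * ε = t * (2 * ε') := by rw [htdef]; field_simp
        _ ≤ t * trNorm (ρ - σ') := by nlinarith
    calc sInf (f '' S) ≤ f σt := csInf_le hbddS ⟨σt, hσtS, rfl⟩
      _ = Mnorm Mset ((t : ℂ) • (ρ - σ')) := by rw [hfdef]; simp only; rw [hdiff]
      _ ≤ t * Mnorm Mset (ρ - σ') := Mnorm_smul_le hM hρ hσ'.1 ht0.le
  have hS'ne : (f '' S').Nonempty := ⟨f σ₀, σ₀, ⟨hσ₀, hσ₀far⟩, rfl⟩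
  have h2 : sInf (f '' S) ≤ t * sInf (f '' S') := by
    have h3 : sInf (f '' S) / t ≤ sInf (f '' S') := by
      apply le_csInf hS'ne
      intro x hx
      rw [div_le_iff₀ ht0]
      rw [mul_comm]
      exact hkey x hx
    calc sInf (f '' S) = t * (sInf (f '' S) / t) := by field_simp
      _ ≤ t * sInf (f '' S') := by nlinarith
  show (1 / (2 * ε)) * sInf (f '' S) ≤ (1 / (2 * ε')) * sInf (f '' S')
  calc (1 / (2 * ε)) * sInf (f '' S) ≤ (1 / (2 * ε)) * (t * sInf (f '' S')) := by
        apply mul_le_mul_of_nonneg_left h2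
        positivity
    _ = (1 / (2 * ε')) * sInf (f '' S') := by
        rw [htdef]
        field_simp


end QSVQDH
end

section
/- For a density operator σ on H and a subspace V with tr(σΠ_V) ≤ 1 − ε for some ε ∈ (0,1), the normalized restriction σ_⊥ = Π_{V⊥} σ Π_{V⊥} / tr(Π_{V⊥} σ) satisfies ‖σ_⊥ − σ‖₁ ≤ 2(tr(Π_V σ) + √(tr(Π_V σ))·√(tr(Π_{V⊥} σ))) ≤ 2(1−ε+√(1−ε)). -/
open Matrix
open scoped ComplexOrder

namespace QSVQDH

variable {d : ℕ}

open scoped MatrixOrder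

lemma trNorm_eq (A : Matrix (Fin d) (Fin d) ℂ) :
    trNorm A = (CFC.sqrt (Aᴴ * A)).trace.re := by
  have h := Matrix.posSemidef_conjTranspose_mul_self A
  rw [CFC.sqrt_eq_cfc, cfc_nnreal_eq_real _ _ h.nonneg, h.1.cfc_eq, IsHermitian.cfc, trNorm]
  have hf : (RCLike.ofReal ∘ (fun x : ℝ => ((NNReal.sqrt x.toNNReal : NNReal) : ℝ)) ∘
      h.1.eigenvalues : Fin d → ℂ) = ((↑) : ℝ → ℂ) ∘ (Real.sqrt ·) ∘ h.1.eigenvalues := by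
    funext i
    simp [Real.coe_sqrt, Real.coe_toNNReal', max_eq_left (h.eigenvalues_nonneg i)]
  rw [hf]
  rfl

noncomputable def nsq (x : Fin d → ℂ) : ℝ := ∑ k, Complex.normSq (x k)

def IsContr (U : Matrix (Fin d) (Fin d) ℂ) : Prop :=
  ∀ x : Fin d → ℂ, nsq (U.mulVec x) ≤ nsq x

lemma nsq_nonneg (x : Fin d → ℂ) : 0 ≤ nsq x :=
  Finset.sum_nonneg fun _ _ => Complex.normSq_nonneg _

lemma trace_conjTranspose_mul_self_re (A : Matrix (Fin d) (Fin d) ℂ) :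
    ((Aᴴ * A).trace).re = ∑ i, nsq (fun k => A k i) := by
  simp only [Matrix.trace, Matrix.diag, Matrix.mul_apply, Matrix.conjTranspose_apply, nsq]
  rw [Complex.re_sum]
  congr 1; ext i
  rw [Complex.re_sum]
  congr 1; ext k
  simp [Complex.normSq_apply, Complex.star_def, Complex.mul_re]

lemma trace_conjTranspose_mul_self_re_nonneg (A : Matrix (Fin d) (Fin d) ℂ) :
    0 ≤ ((Aᴴ * A).trace).re := by
  rw [trace_conjTranspose_mul_self_re]
  exact Finset.sum_nonneg fun _ _ => nsq_nonneg _

lemma abs_dot_le (a b : Fin d → ℂ) :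
    ‖star a ⬝ᵥ b‖ ≤ Real.sqrt (nsq a) * Real.sqrt (nsq b) := by
  calc ‖star a ⬝ᵥ b‖ ≤ ∑ k, ‖star (a k) * b k‖ := by
        simpa [dotProduct] using
          norm_sum_le Finset.univ (fun k => star (a k) * b k)
    _ = ∑ k, ‖a k‖ * ‖b k‖ := by
        simp [norm_mul]
    _ ≤ Real.sqrt (∑ k, ‖a k‖ ^ 2) * Real.sqrt (∑ k, ‖b k‖ ^ 2) :=
        Real.sum_mul_le_sqrt_mul_sqrt _ _ _
    _ = Real.sqrt (nsq a) * Real.sqrt (nsq b) := by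
        simp [nsq, Complex.sq_norm]

lemma trace_eq_sum_col (M B A : Matrix (Fin d) (Fin d) ℂ) :
    ((Aᴴ * M * B).trace) = ∑ i, star (fun k => A k i) ⬝ᵥ M.mulVec (fun k => B k i) := by
  rw [Matrix.mul_assoc]
  simp only [Matrix.trace, Matrix.diag, Matrix.mul_apply, Matrix.conjTranspose_apply,
    dotProduct, Matrix.mulVec, Pi.star_apply]

lemma holder (A U B : Matrix (Fin d) (Fin d) ℂ) (hU : IsContr U) :
    ‖(Aᴴ * U * B).trace‖ ≤
      Real.sqrt ((Aᴴ * A).trace.re) * Real.sqrt ((Bᴴ * B).trace.re) := by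
  rw [trace_eq_sum_col, trace_conjTranspose_mul_self_re, trace_conjTranspose_mul_self_re]
  calc ‖∑ i, star (fun k => A k i) ⬝ᵥ U.mulVec (fun k => B k i)‖
      ≤ ∑ i, ‖star (fun k => A k i) ⬝ᵥ U.mulVec (fun k => B k i)‖ :=
        norm_sum_le _ _
    _ ≤ ∑ i, Real.sqrt (nsq (fun k => A k i)) * Real.sqrt (nsq (fun k => B k i)) := by
        refine Finset.sum_le_sum fun i _ => (abs_dot_le _ _).trans ?_
        exact mul_le_mul_of_nonneg_left (Real.sqrt_le_sqrt (hU _)) (Real.sqrt_nonneg _)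
    _ ≤ Real.sqrt (∑ i, nsq (fun k => A k i)) * Real.sqrt (∑ i, nsq (fun k => B k i)) :=
        Real.sum_sqrt_mul_sqrt_le _ (fun i => nsq_nonneg _) (fun i => nsq_nonneg _)

lemma sqrt_eq_self {M : Matrix (Fin d) (Fin d) ℂ} (hM : M.PosSemidef) :
    CFC.sqrt (Mᴴ * M) = M := by
  refine CFC.sqrt_unique ?_ hM.nonneg
  rw [hM.1.eq]

lemma trNorm_of_posSemidef {M : Matrix (Fin d) (Fin d) ℂ} (hM : M.PosSemidef) :
    trNorm M = M.trace.re := by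
  rw [trNorm_eq, sqrt_eq_self hM]

lemma nsq_eq_dot (x : Fin d → ℂ) : nsq x = (star x ⬝ᵥ x).re := by
  simp only [nsq, dotProduct, Pi.star_apply, Complex.re_sum]
  congr 1; ext k
  simp [Complex.normSq_apply, Complex.star_def, Complex.mul_re]

lemma nsq_mulVec_of_unitary {W : Matrix (Fin d) (Fin d) ℂ} (hW : Wᴴ * W = 1)
    (x : Fin d → ℂ) : nsq (W.mulVec x) = nsq x := by
  rw [nsq_eq_dot, nsq_eq_dot, Matrix.star_mulVec, dotProduct_mulVec,
    Matrix.vecMul_vecMul, hW, Matrix.vecMul_one]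

lemma exists_contr_dual (Δ : Matrix (Fin d) (Fin d) ℂ) (hΔ : Δ.IsHermitian) :
    ∃ U : Matrix (Fin d) (Fin d) ℂ, IsContr U ∧ trNorm Δ = ((U * Δ).trace).re := by
  set V : Matrix (Fin d) (Fin d) ℂ := (hΔ.eigenvectorUnitary : Matrix (Fin d) (Fin d) ℂ) with hV
  have hVuV : Vᴴ * V = 1 := by
    simpa [Matrix.star_eq_conjTranspose] using
      ((Matrix.mem_unitaryGroup_iff').mp hΔ.eigenvectorUnitary.2)
  have hVVu : V * Vᴴ = 1 := by
    simpa [Matrix.star_eq_conjTranspose] using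
      ((Matrix.mem_unitaryGroup_iff).mp hΔ.eigenvectorUnitary.2)
  set lam : Fin d → ℝ := hΔ.eigenvalues with hlam
  set sgn : Fin d → ℂ := fun i => if 0 ≤ lam i then 1 else -1 with hsgn
  set U : Matrix (Fin d) (Fin d) ℂ := V * Matrix.diagonal sgn * Vᴴ with hU
  have hspec : Δ = V * Matrix.diagonal (fun i => (lam i : ℂ)) * Vᴴ := by
    simpa [Function.comp_def, Matrix.star_eq_conjTranspose] using hΔ.spectral_theorem
  have key : ∀ f g : Fin d → ℂ, (V * Matrix.diagonal f * Vᴴ) * (V * Matrix.diagonal g * Vᴴ)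
      = V * Matrix.diagonal (fun i => f i * g i) * Vᴴ := by
    intro f g
    simp only [Matrix.mul_assoc]
    rw [← Matrix.mul_assoc Vᴴ V, hVuV, Matrix.one_mul,
      ← Matrix.mul_assoc (Matrix.diagonal f), Matrix.diagonal_mul_diagonal]
  have keytr : ∀ D : Matrix (Fin d) (Fin d) ℂ, (V * D * Vᴴ).trace = D.trace := by
    intro D
    rw [Matrix.trace_mul_comm, ← Matrix.mul_assoc, hVuV, Matrix.one_mul]
  have hcontr : IsContr U := by
    intro x
    have h1 : U.mulVec x = V.mulVec ((Matrix.diagonal sgn).mulVec (Vᴴ.mulVec x)) := by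
      simp [hU, Matrix.mulVec_mulVec, Matrix.mul_assoc]
    rw [h1, nsq_mulVec_of_unitary hVuV]
    have h2 : nsq ((Matrix.diagonal sgn).mulVec (Vᴴ.mulVec x)) = nsq (Vᴴ.mulVec x) := by
      unfold nsq
      congr 1; ext k
      rw [Matrix.mulVec_diagonal]
      rcases le_or_gt 0 (lam k) with h | h
      · simp [hsgn, h]
      · simp [hsgn, not_le.mpr h]
    rw [h2]
    have h3 : (Vᴴ)ᴴ * Vᴴ = 1 := by rw [Matrix.conjTranspose_conjTranspose, hVVu]
    rw [nsq_mulVec_of_unitary h3]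
  have habs : CFC.sqrt (Δᴴ * Δ)
      = V * Matrix.diagonal (fun i => ((|lam i| : ℝ) : ℂ)) * Vᴴ := by
    set S : Matrix (Fin d) (Fin d) ℂ := V * Matrix.diagonal (fun i => ((|lam i| : ℝ) : ℂ)) * Vᴴ
      with hS
    have hSpsd : S.PosSemidef := by
      refine Matrix.PosSemidef.mul_mul_conjTranspose_same ?_ V
      refine Matrix.posSemidef_diagonal_iff.mpr fun i => ?_
      exact_mod_cast abs_nonneg (lam i)
    have hSsq : S ^ 2 = Δᴴ * Δ := by
      rw [hΔ.eq, pow_two, hS, hspec, key, key]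
      have : (fun i => ((|lam i| : ℝ) : ℂ) * ((|lam i| : ℝ) : ℂ))
          = fun i => ((lam i : ℝ) : ℂ) * ((lam i : ℝ) : ℂ) := by
        funext i
        rw [← Complex.ofReal_mul, ← Complex.ofReal_mul, abs_mul_abs_self]
      rw [this]
    exact CFC.sqrt_unique (by rw [← pow_two]; exact hSsq) hSpsd.nonneg
  refine ⟨U, hcontr, ?_⟩
  have htrU : (U * Δ) = V * Matrix.diagonal (fun i => sgn i * (lam i : ℂ)) * Vᴴ := by
    rw [hU, hspec, key]
  have hds : ∀ i, sgn i * (lam i : ℂ) = ((|lam i| : ℝ) : ℂ) := by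
    intro i
    rcases le_or_gt 0 (lam i) with h | h
    · simp [hsgn, h, abs_of_nonneg h]
    · simp [hsgn, not_le.mpr h, abs_of_neg h]
  rw [trNorm_eq, habs, htrU, keytr, keytr]
  simp [hds]

/-- the normalized restriction of σ to V^⊥ stays trace-norm close to σ. -/
theorem sigma_perp_trNorm_bound (P σ : Matrix (Fin d) (Fin d) ℂ)
    (hP : P.IsHermitian) (hP2 : P * P = P) (hσ : IsDensity σ)
    (ε : ℝ) (hε : ε ∈ Set.Ioo (0 : ℝ) 1) (htr : (σ * P).trace.re ≤ 1 - ε) :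
    trNorm ((((1 : Matrix (Fin d) (Fin d) ℂ) - P) * σ).trace.re⁻¹ •
        ((1 - P) * σ * (1 - P)) - σ) ≤
      2 * ((P * σ).trace.re +
        Real.sqrt ((P * σ).trace.re) * Real.sqrt (((1 - P) * σ).trace.re)) ∧
    2 * ((P * σ).trace.re +
        Real.sqrt ((P * σ).trace.re) * Real.sqrt (((1 - P) * σ).trace.re)) ≤
      2 * (1 - ε + Real.sqrt (1 - ε)) := by
  obtain ⟨hσpsd, hσtr⟩ := hσ
  set Q : Matrix (Fin d) (Fin d) ℂ := 1 - P with hQdef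
  have hQ : Q.IsHermitian := (Matrix.isHermitian_one).sub hP
  have hQ2 : Q * Q = Q := by
    simp only [hQdef, Matrix.mul_sub, Matrix.sub_mul, Matrix.one_mul, Matrix.mul_one, hP2]
    abel
  set S : Matrix (Fin d) (Fin d) ℂ := CFC.sqrt σ with hSdef
  have hSherm : S.IsHermitian := (CFC.sqrt_nonneg σ).posSemidef.1
  have hSS : S * S = σ := CFC.sqrt_mul_sqrt_self σ hσpsd.nonneg
  set p : ℝ := (P * σ).trace.re with hpdef
  set q : ℝ := (Q * σ).trace.re with hqdef
  -- gram identity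
  have gram : ∀ A : Matrix (Fin d) (Fin d) ℂ, A.IsHermitian → A * A = A →
      ((A * S)ᴴ * (A * S)).trace = (A * σ).trace := by
    intro A hA hA2
    rw [Matrix.conjTranspose_mul, hA.eq, hSherm.eq]
    have h1 : S * A * (A * S) = S * (A * S) := by
      rw [Matrix.mul_assoc, ← Matrix.mul_assoc A A S, hA2]
    rw [h1, Matrix.trace_mul_comm, Matrix.mul_assoc, hSS]
  have hp0 : 0 ≤ p := by
    have := trace_conjTranspose_mul_self_re_nonneg (P * S)
    rwa [gram P hP hP2] at this
  have hq0 : 0 ≤ q := by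
    have := trace_conjTranspose_mul_self_re_nonneg (Q * S)
    rwa [gram Q hQ hQ2] at this
  have hpq : p + q = 1 := by
    have : (P * σ).trace + (Q * σ).trace = 1 := by
      rw [← Matrix.trace_add, ← Matrix.add_mul]
      simp [hQdef, hσtr]
    have := congrArg Complex.re this
    simpa [hpdef, hqdef, Complex.add_re] using this
  have hple : p ≤ 1 - ε := by rwa [hpdef, Matrix.trace_mul_comm]
  have hqpos : 0 < q := by
    have : ε ≤ q := by linarith
    linarith [hε.1]
  -- the Hermitian difference
  set Δ : Matrix (Fin d) (Fin d) ℂ := q⁻¹ • (Q * σ * Q) - σ with hΔdef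
  have hΔherm : Δ.IsHermitian := by
    have h1 : (Q * σ * Q).IsHermitian := by
      rw [Matrix.IsHermitian, Matrix.conjTranspose_mul, Matrix.conjTranspose_mul,
        hQ.eq, hσpsd.1.eq, Matrix.mul_assoc]
    rw [Matrix.IsHermitian, Matrix.conjTranspose_sub, Matrix.conjTranspose_smul, hσpsd.1.eq,
      star_trivial, h1.eq]
  obtain ⟨U, hU, hdual⟩ := exists_contr_dual Δ hΔherm
  -- bounds on the four pieces
  have cyc : ∀ A B : Matrix (Fin d) (Fin d) ℂ, A.IsHermitian → B.IsHermitian →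
      (U * (A * σ * B)).trace = ((B * S)ᴴ * U * (A * S)).trace := by
    intro A B hA hB
    have h1 : A * σ * B = (A * S) * (S * B) := by
      rw [← hSS]; simp only [Matrix.mul_assoc]
    have h2 : (B * S)ᴴ = S * B := by
      rw [Matrix.conjTranspose_mul, hB.eq, hSherm.eq]
    rw [h1, h2, ← Matrix.mul_assoc, Matrix.trace_mul_cycle, ← Matrix.mul_assoc]
  have bound : ∀ A B : Matrix (Fin d) (Fin d) ℂ, A.IsHermitian → B.IsHermitian →
      A * A = A → B * B = B →
      ‖(U * (A * σ * B)).trace‖ ≤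
        Real.sqrt ((B * σ).trace.re) * Real.sqrt ((A * σ).trace.re) := by
    intro A B hA hB hA2 hB2
    rw [cyc A B hA hB]
    have := holder (B * S) U (A * S) hU
    rwa [gram A hA hA2, gram B hB hB2] at this
  -- decompose Δ
  have hσdec : σ = Q * σ * Q + Q * σ * P + P * σ * Q + P * σ * P := by
    simp only [hQdef, Matrix.mul_sub, Matrix.sub_mul, Matrix.one_mul, Matrix.mul_one]
    abel
  have hdecomp : Δ = (q⁻¹ - 1) • (Q * σ * Q) - Q * σ * P - P * σ * Q - P * σ * P := by
    calc Δ = q⁻¹ • (Q * σ * Q) - (Q * σ * Q + Q * σ * P + P * σ * Q + P * σ * P) := by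
          rw [hΔdef, ← hσdec]
      _ = (q⁻¹ - 1) • (Q * σ * Q) - Q * σ * P - P * σ * Q - P * σ * P := by
          rw [sub_smul, one_smul]; abel
  have htrace : ((U * Δ).trace).re =
      (q⁻¹ - 1) * ((U * (Q * σ * Q)).trace).re - ((U * (Q * σ * P)).trace).re
        - ((U * (P * σ * Q)).trace).re - ((U * (P * σ * P)).trace).re := by
    rw [hdecomp]
    simp only [Matrix.mul_sub, Matrix.mul_smul, Matrix.trace_sub, Matrix.trace_smul,
      Complex.sub_re]
    congr 1
    congr 1
    congr 1
    simp [Complex.real_smul, Complex.mul_re]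
  -- main bound
  have hQQ : ‖(U * (Q * σ * Q)).trace‖ ≤ q := by
    have := bound Q Q hQ hQ hQ2 hQ2
    rwa [← hqdef, Real.mul_self_sqrt hq0] at this
  have hPP : ‖(U * (P * σ * P)).trace‖ ≤ p := by
    have := bound P P hP hP hP2 hP2
    rwa [← hpdef, Real.mul_self_sqrt hp0] at this
  have hQP : ‖(U * (Q * σ * P)).trace‖ ≤ Real.sqrt p * Real.sqrt q :=
    bound Q P hQ hP hQ2 hP2
  have hPQ : ‖(U * (P * σ * Q)).trace‖ ≤ Real.sqrt q * Real.sqrt p :=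
    bound P Q hP hQ hP2 hQ2
  have hcoef : 0 ≤ q⁻¹ - 1 := by
    have hq1 : q ≤ 1 := by linarith
    have := one_le_inv_iff₀.mpr ⟨hqpos, hq1⟩
    linarith
  have hinvq : (q⁻¹ - 1) * q = p := by
    rw [sub_mul, inv_mul_cancel₀ hqpos.ne', one_mul]
    linarith
  have hcomm : Real.sqrt q * Real.sqrt p = Real.sqrt p * Real.sqrt q := mul_comm _ _
  have e1 : ((U * (Q * σ * Q)).trace).re ≤ q := (Complex.re_le_norm _).trans hQQ
  have e2 := abs_le.mp ((Complex.abs_re_le_norm ((U * (Q * σ * P)).trace)).trans hQP)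
  have e3 := abs_le.mp ((Complex.abs_re_le_norm ((U * (P * σ * Q)).trace)).trans hPQ)
  have e4 := abs_le.mp ((Complex.abs_re_le_norm ((U * (P * σ * P)).trace)).trans hPP)
  constructor
  · have b1 : (q⁻¹ - 1) * ((U * (Q * σ * Q)).trace).re ≤ (q⁻¹ - 1) * q :=
      mul_le_mul_of_nonneg_left e1 hcoef
    rw [hdual, htrace]
    linarith [e2.1, e3.1, e4.1]
  · have h1e : Real.sqrt p ≤ Real.sqrt (1 - ε) := Real.sqrt_le_sqrt hple
    have h2e : Real.sqrt q ≤ 1 := Real.sqrt_le_one.mpr (by linarith)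
    have h3e : Real.sqrt p * Real.sqrt q ≤ Real.sqrt (1 - ε) := by
      calc Real.sqrt p * Real.sqrt q ≤ Real.sqrt (1 - ε) * 1 :=
        mul_le_mul h1e h2e (Real.sqrt_nonneg _) (Real.sqrt_nonneg _)
      _ = Real.sqrt (1 - ε) := mul_one _
    linarith


end QSVQDH
end

section
/- If |Φ⟩ is a pure state in a finite-dimensional Hilbert space and Ω is a Hermitian operator with 0 ≤ Ω ≤ I, Ω|Φ⟩ = |Φ⟩, and max{tr(Ωσ) : σ density operator with tr(σΦ) = 0} ≤ 1 − g for some g > 0, then for every ε ∈ (0,1] and every density operator σ with tr(σΦ) ≤ 1 − ε, tr(Ω(Φ − σ)) ≥ ε·g, where Φ = |Φ⟩⟨Φ|. -/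
open Matrix
open scoped ComplexOrder

namespace QSVQDH

variable {d : ℕ}

lemma smul_posSemidef' {A : Matrix (Fin d) (Fin d) ℂ} (hA : A.PosSemidef)
    {c : ℝ} (hc : 0 ≤ c) : ((c : ℂ) • A).PosSemidef := by
  rw [posSemidef_iff_dotProduct_mulVec]
  constructor
  · unfold Matrix.IsHermitian
    rw [conjTranspose_smul, hA.1.eq]
    simp
  · intro x
    rw [Matrix.smul_mulVec, dotProduct_smul, smul_eq_mul]
    exact mul_nonneg (Complex.zero_le_real.mpr hc) (hA.dotProduct_mulVec_nonneg x)

/-- a strategy fixing a pure target state Φ with spectral gap g achieves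
detection advantage ε·g against any state of fidelity at most 1 − ε. -/
theorem pure_state_universal_strategy (Φ Ω : Matrix (Fin d) (Fin d) ℂ)
    (hΦ : IsDensity Φ) (hΦpure : Φ * Φ = Φ) (hΩ : IsPOVMElem Ω) (hfix : Ω * Φ = Φ)
    (g : ℝ) (hg : 0 < g)
    (hgap : ∀ σ : Matrix (Fin d) (Fin d) ℂ, IsDensity σ → (σ * Φ).trace = 0 →
      (Ω * σ).trace.re ≤ 1 - g) :
    ∀ ε : ℝ, ε ∈ Set.Ioc (0 : ℝ) 1 →
      ∀ σ : Matrix (Fin d) (Fin d) ℂ, IsDensity σ → (σ * Φ).trace.re ≤ 1 - ε →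
        ε * g ≤ (Ω * (Φ - σ)).trace.re := by
  intro ε hε σ hσ hfid
  obtain ⟨hεpos, hε1⟩ := hε
  have hΦH : Φᴴ = Φ := hΦ.1.1.eq
  have hΩH : Ωᴴ = Ω := hΩ.1.1.eq
  have hfix' : Φ * Ω = Φ := by
    have := congrArg conjTranspose hfix
    rwa [conjTranspose_mul, hΦH, hΩH] at this
  set p : ℝ := (σ * Φ).trace.re with hp
  have hcycle : (σ * Φ).trace = (Φ * σ * Φ).trace := by
    rw [Matrix.trace_mul_cycle Φ σ Φ, hΦpure, Matrix.trace_mul_comm]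
  have hPSD : (Φ * σ * Φ).PosSemidef := by
    have := hσ.1.mul_mul_conjTranspose_same Φ
    rwa [hΦH] at this
  have hreal : (σ * Φ).trace = (p : ℂ) := by
    have h1 : star (Φ * σ * Φ).trace = (Φ * σ * Φ).trace := by
      rw [← Matrix.trace_conjTranspose, hPSD.1.eq]
    have h2 := Complex.conj_eq_iff_re.mp h1
    rw [hcycle, ← h2, hp, hcycle]
  set T : Matrix (Fin d) (Fin d) ℂ := (1 - Φ) * σ * (1 - Φ) with hT
  have hTpsd : T.PosSemidef := by
    have := hσ.1.mul_mul_conjTranspose_same (1 - Φ)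
    rwa [conjTranspose_sub, conjTranspose_one, hΦH] at this
  have hTtrace : T.trace = 1 - (p : ℂ) := by
    rw [hT]
    have h3 : (1 - Φ) * σ * (1 - Φ) = σ - Φ * σ - σ * Φ + Φ * σ * Φ := by
      noncomm_ring
    rw [h3, Matrix.trace_add, Matrix.trace_sub, Matrix.trace_sub, hσ.2,
      ← hcycle, hreal, Matrix.trace_mul_comm Φ σ, hreal]
    ring
  have hεle : ε ≤ 1 - p := by linarith
  have h1p : (0:ℝ) < 1 - p := lt_of_lt_of_le hεpos hεle
  set σ' : Matrix (Fin d) (Fin d) ℂ := (((1 - p)⁻¹ : ℝ) : ℂ) • T with hσ'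
  have hσ'dens : IsDensity σ' := by
    constructor
    · exact smul_posSemidef' hTpsd (by positivity)
    · rw [hσ', Matrix.trace_smul, hTtrace, smul_eq_mul]
      rw [← Complex.ofReal_one, ← Complex.ofReal_sub,
        ← Complex.ofReal_mul, inv_mul_cancel₀ (ne_of_gt h1p)]
  have hQΦ : (1 - Φ) * Φ = 0 := by rw [Matrix.sub_mul, Matrix.one_mul, hΦpure, sub_self]
  have hTΦ : T * Φ = 0 := by
    rw [hT, mul_assoc ((1 - Φ) * σ) (1 - Φ) Φ, hQΦ, mul_zero]
  have horth : (σ' * Φ).trace = 0 := by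
    rw [hσ', Matrix.smul_mul, hTΦ, Matrix.trace_smul, smul_eq_mul,
      Matrix.trace_zero, mul_zero]
  have hgapσ' := hgap σ' hσ'dens horth
  have hkey : (Ω * T).trace = (Ω * σ).trace - (σ * Φ).trace := by
    have h1 : (Ω * T).trace = ((1 - Φ) * Ω * (1 - Φ) * σ).trace := by
      rw [hT]
      rw [show Ω * ((1 - Φ) * σ * (1 - Φ)) = (Ω * (1 - Φ)) * σ * (1 - Φ) by
        noncomm_ring]
      rw [Matrix.trace_mul_cycle (Ω * (1 - Φ)) σ (1 - Φ)]
      congr 1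
      noncomm_ring
    have h2 : (1 - Φ) * Ω * (1 - Φ) = Ω - Φ := by
      have h4 : (1 - Φ) * Ω * (1 - Φ) = Ω - Φ * Ω - Ω * Φ + Φ * (Ω * Φ) := by
        noncomm_ring
      rw [h4, hfix, hfix', hΦpure]
      noncomm_ring
    rw [h1, h2, Matrix.sub_mul, Matrix.trace_sub, Matrix.trace_mul_comm Φ σ]
  have hΩT : (Ω * T).trace.re = (1 - p) * (Ω * σ').trace.re := by
    have h5 : (Ω * σ').trace = (((1 - p)⁻¹ : ℝ) : ℂ) * (Ω * T).trace := by
      rw [hσ', Matrix.mul_smul, Matrix.trace_smul, smul_eq_mul]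
    rw [h5, Complex.re_ofReal_mul]
    field_simp
  have hΩTle : (Ω * T).trace.re ≤ (1 - p) * (1 - g) := by
    rw [hΩT]
    exact mul_le_mul_of_nonneg_left hgapσ' (le_of_lt h1p)
  have hΩΦ : (Ω * Φ).trace = 1 := by rw [hfix, hΦ.2]
  have hfin : (Ω * (Φ - σ)).trace.re = 1 - (Ω * σ).trace.re := by
    rw [Matrix.mul_sub, Matrix.trace_sub, Complex.sub_re, hΩΦ]
    simp
  have hΩσ : (Ω * σ).trace.re = p + (Ω * T).trace.re := by
    have h6 := congrArg Complex.re hkey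
    rw [Complex.sub_re, hreal] at h6
    simp at h6
    linarith
  rw [hfin, hΩσ]
  nlinarith [mul_le_mul_of_nonneg_left hεle (le_of_lt hg)]


end QSVQDH
end
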